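/- For every k ≥ 1, the circulant digraph Cay(ℤ₁₂ₖ; 6k, 6k+2, 6k+3) has no hamiltonian circuit. -/

import Mathlib

private lemma aux_mod_twelve_k (k p : ℕ) (hk : 1 ≤ k) (hp : 2 ≤ p) (hpn : p ∣ 12*k)
    (σ : Equiv.Perm (ZMod (12*k))) (D : ZMod (12*k) → ℕ)
    (hσ : ∀ v, σ v = v + ((D v : ℕ) : ZMod (12*k)))
    (hmod : ∀ v, D v % p = 0)
    (htr : ∃ i : ℕ, (σ ^ i) 0 = 1) : False := by
  haveI : NeZero (12*k) := ⟨by omega⟩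
  have key : ∀ i : ℕ, ((σ ^ i) 0).val % p = 0 := by
    intro i
    induction i with
    | zero => simp
    | succ i ih =>
      rw [pow_succ', Equiv.Perm.mul_apply, hσ]
      rw [ZMod.val_add, ZMod.val_natCast]
      rw [Nat.mod_mod_of_dvd _ hpn, Nat.add_mod, Nat.mod_mod_of_dvd _ hpn, hmod, ih]
      simp
  obtain ⟨i, hi⟩ := htr
  have h1 := key i
  rw [hi] at h1
  have hv1 : (1 : ZMod (12*k)).val = 1 := by
    have : ((1:ℕ) : ZMod (12*k)).val = 1 := ZMod.val_natCast_of_lt (by omega)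
    simpa using this
  rw [hv1, Nat.mod_eq_of_lt (by omega : 1 < p)] at h1
  exact one_ne_zero h1

/-- For every `k ≥ 1`, the circulant digraph
`Cay(ℤ₁₂ₖ; 6k, 6k+2, 6k+3)` has no hamiltonian circuit. -/
theorem no_ham_circuit_twelve_k (k : ℕ) (hk : 1 ≤ k) :
    ¬ ∃ σ : Equiv.Perm (ZMod (12 * k)),
      (∀ v : ZMod (12 * k), σ v - v ∈
        ({((6 * k : ℕ) : ZMod (12 * k)), ((6 * k + 2 : ℕ) : ZMod (12 * k)),
          ((6 * k + 3 : ℕ) : ZMod (12 * k))} : Set (ZMod (12 * k)))) ∧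
      (∀ v w : ZMod (12 * k), ∃ i : ℕ, (σ ^ i) v = w) := by
  rintro ⟨σ, hstep, htrans⟩
  haveI : NeZero (12*k) := ⟨by omega⟩
  classical
  set D : ZMod (12*k) → ℕ := fun v => (σ v - v).val with hD
  have hval : ∀ v, D v = 6*k ∨ D v = 6*k+2 ∨ D v = 6*k+3 := by
    intro v
    have h := hstep v
    simp only [Set.mem_insert_iff, Set.mem_singleton_iff] at h
    rcases h with h|h|h
    · left; simp only [hD]; rw [h, ZMod.val_natCast_of_lt (by omega)]
    · right; left; simp only [hD]; rw [h, ZMod.val_natCast_of_lt (by omega)]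
    · right; right; simp only [hD]; rw [h, ZMod.val_natCast_of_lt (by omega)]
  have hσ : ∀ v, σ v = v + ((D v : ℕ) : ZMod (12*k)) := by
    intro v
    simp only [hD]
    rw [ZMod.natCast_zmod_val]
    ring
  have hcast_inj : ∀ i j : ℕ, i < 12*k → j < 12*k →
      ((i : ZMod (12*k)) = (j : ZMod (12*k))) → i = j := by
    intro i j hi hj h
    have := congrArg ZMod.val h
    rwa [ZMod.val_natCast_of_lt hi, ZMod.val_natCast_of_lt hj] at this
  -- injectivity facts
  have f2 : ∀ v, D v = 6*k+3 → D (v+1) ≠ 6*k+2 := by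
    intro v h3 h2
    have e : σ (v+1) = σ v := by rw [hσ, hσ, h3, h2]; push_cast; ring
    have e2 := σ.injective e
    have e3 : ((1:ℕ) : ZMod (12*k)) = ((0:ℕ) : ZMod (12*k)) := by
      push_cast; linear_combination e2
    have := hcast_inj 1 0 (by omega) (by omega) e3; omega
  have f3 : ∀ v, D v = 6*k+3 → D (v+3) ≠ 6*k := by
    intro v h3 h0
    have e : σ (v+3) = σ v := by rw [hσ, hσ, h3, h0]; push_cast; ring
    have e2 := σ.injective e
    have e3 : ((3:ℕ) : ZMod (12*k)) = ((0:ℕ) : ZMod (12*k)) := by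
      push_cast; linear_combination e2
    have := hcast_inj 3 0 (by omega) (by omega) e3; omega
  have f4 : ∀ v, D v = 6*k+2 → D (v+2) ≠ 6*k := by
    intro v h2 h0
    have e : σ (v+2) = σ v := by rw [hσ, hσ, h2, h0]; push_cast; ring
    have e2 := σ.injective e
    have e3 : ((2:ℕ) : ZMod (12*k)) = ((0:ℕ) : ZMod (12*k)) := by
      push_cast; linear_combination e2
    have := hcast_inj 2 0 (by omega) (by omega) e3; omega
  -- counting
  set A := Finset.univ.filter (fun v : ZMod (12*k) => D v = 6*k) with hA
  set B := Finset.univ.filter (fun v : ZMod (12*k) => D v = 6*k+2) with hB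
  set C := Finset.univ.filter (fun v : ZMod (12*k) => D v = 6*k+3) with hC
  have hdAB : Disjoint A B := by
    rw [Finset.disjoint_left]
    intro v hv hv'
    simp only [hA, hB, Finset.mem_filter] at hv hv'
    omega
  have hdABC : Disjoint (A ∪ B) C := by
    rw [Finset.disjoint_left]
    intro v hv hv'
    simp only [hA, hB, hC, Finset.mem_union, Finset.mem_filter] at hv hv'
    omega
  have hU : (Finset.univ : Finset (ZMod (12*k))) = (A ∪ B) ∪ C := by
    ext v
    simp only [hA, hB, hC, Finset.mem_union, Finset.mem_filter, Finset.mem_univ, true_and,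
      iff_true]
    have := hval v; tauto
  have hcards : A.card + B.card + C.card = 12*k := by
    have h1 : (Finset.univ : Finset (ZMod (12*k))).card = 12*k := by
      rw [Finset.card_univ, ZMod.card]
    rw [hU, Finset.card_union_of_disjoint hdABC, Finset.card_union_of_disjoint hdAB] at h1
    omega
  have hsum : ∑ v : ZMod (12*k), D v
      = (6*k) * A.card + (6*k+2) * B.card + (6*k+3) * C.card := by
    have h0 : ∑ v : ZMod (12*k), D v = ∑ v ∈ (A ∪ B) ∪ C, D v := by rw [← hU]
    rw [h0, Finset.sum_union hdABC, Finset.sum_union hdAB]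
    have hAs : ∑ v ∈ A, D v = (6*k) * A.card := by
      rw [Finset.sum_congr rfl (fun v hv => by
        simp only [hA, Finset.mem_filter] at hv; exact hv.2), Finset.sum_const, smul_eq_mul,
        mul_comm]
    have hBs : ∑ v ∈ B, D v = (6*k+2) * B.card := by
      rw [Finset.sum_congr rfl (fun v hv => by
        simp only [hB, Finset.mem_filter] at hv; exact hv.2), Finset.sum_const, smul_eq_mul,
        mul_comm]
    have hCs : ∑ v ∈ C, D v = (6*k+3) * C.card := by
      rw [Finset.sum_congr rfl (fun v hv => by
        simp only [hC, Finset.mem_filter] at hv; exact hv.2), Finset.sum_const, smul_eq_mul,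
        mul_comm]
    rw [hAs, hBs, hCs]
  have hzero : ((∑ v : ZMod (12*k), D v : ℕ) : ZMod (12*k)) = 0 := by
    push_cast
    have he : ∀ v : ZMod (12*k), ((D v : ℕ) : ZMod (12*k)) = σ v - v := by
      intro v; rw [hσ v]; ring
    rw [Finset.sum_congr rfl (fun v _ => he v), Finset.sum_sub_distrib,
      Equiv.sum_comp σ (fun v => v), sub_self]
  have hdvd : 12*k ∣ ∑ v : ZMod (12*k), D v :=
    (ZMod.natCast_eq_zero_iff _ _).mp hzero
  have hdvdS : 12*k ∣ 2*B.card + 3*C.card := by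
    have e : (6*k) * A.card + (6*k+2) * B.card + (6*k+3) * C.card
        = 6*k*(A.card + B.card + C.card) + (2*B.card + 3*C.card) := by ring
    rw [hsum, e, hcards] at hdvd
    have h72 : 12*k ∣ 6*k*(12*k) := ⟨6*k, by ring⟩
    exact (Nat.dvd_add_right h72).mp hdvd
  obtain ⟨m, hmS⟩ := hdvdS
  have hble : 2*B.card + 3*C.card ≤ 36*k := by omega
  have hm3 : m ≤ 3 := by
    by_contra h
    push_neg at h
    have h48 : 48*k ≤ 12*k*m := by
      calc 48*k = 12*k*4 := by ring
        _ ≤ 12*k*m := Nat.mul_le_mul_left _ (by omega)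
    rw [← hmS] at h48
    omega
  -- the "2-cycle" fact, used in case m = 1
  have htwo : ∀ w : ZMod (12*k), D w = 6*k →
      D (w + ((6*k:ℕ) : ZMod (12*k))) = 6*k → False := by
    intro w h1 h2
    set u := w + ((6*k:ℕ) : ZMod (12*k)) with hu
    have hσw : σ w = u := by rw [hσ, h1]
    have hcc : ((6*k:ℕ) : ZMod (12*k)) + ((6*k:ℕ) : ZMod (12*k)) = 0 := by
      rw [← Nat.cast_add, show 6*k+6*k = 12*k by ring, ZMod.natCast_self]
    have hσu : σ u = w := by
      rw [hσ, h2, hu, add_assoc, hcc, add_zero]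
    have horb : ∀ i : ℕ, (σ ^ i) w = w ∨ (σ ^ i) w = u := by
      intro i
      induction i with
      | zero => left; rfl
      | succ i ih =>
        rw [pow_succ', Equiv.Perm.mul_apply]
        rcases ih with h|h
        · right; rw [h, hσw]
        · left; rw [h, hσu]
    obtain ⟨i, hi⟩ := htrans w (w + 1)
    rcases horb i with h|h <;> rw [hi] at h
    · have e3 : ((1:ℕ) : ZMod (12*k)) = ((0:ℕ) : ZMod (12*k)) := by
        push_cast; linear_combination h
      have := hcast_inj 1 0 (by omega) (by omega) e3; omega
    · have e3 : ((1:ℕ) : ZMod (12*k)) = ((6*k:ℕ) : ZMod (12*k)) := by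
        rw [hu] at h; push_cast at h ⊢; linear_combination h
      have := hcast_inj 1 (6*k) (by omega) (by omega) e3; omega
  interval_cases m
  -- case m = 0 : all steps even
  · have hc0 : C.card = 0 := by omega
    have hno3 : ∀ v, D v ≠ 6*k+3 := by
      intro v hv
      have hvC : v ∈ C := by simp only [hC, Finset.mem_filter]; exact ⟨Finset.mem_univ _, hv⟩
      have : C = ∅ := Finset.card_eq_zero.mp hc0
      rw [this] at hvC
      simp at hvC
    exact aux_mod_twelve_k k 2 hk (by omega) ⟨6*k, by ring⟩ σ D hσ
      (fun v => by rcases hval v with h|h|h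
                   · omega
                   · omega
                   · exact absurd h (hno3 v))
      (htrans 0 1)
  -- case m = 1 : c = 0 via 2a ≤ 12k, again all steps even
  · have ha2 : 2 * A.card ≤ 12*k := by
      set A' := A.image (fun v => v + ((6*k:ℕ) : ZMod (12*k))) with hA'
      have hinj' : Function.Injective
          (fun v : ZMod (12*k) => v + ((6*k:ℕ) : ZMod (12*k))) := add_left_injective _
      have hcard' : A'.card = A.card := Finset.card_image_of_injective _ hinj'
      have hdis : Disjoint A A' := by
        rw [Finset.disjoint_left]
        intro v hv hv'
        obtain ⟨w, hw, hwv⟩ := Finset.mem_image.mp hv'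
        simp only [hA, Finset.mem_filter] at hv hw
        exact htwo w hw.2 (by rw [hwv]; exact hv.2)
      have hle : (A ∪ A').card ≤ 12*k := by
        calc (A ∪ A').card ≤ (Finset.univ : Finset (ZMod (12*k))).card :=
              Finset.card_le_card (Finset.subset_univ _)
          _ = 12*k := by rw [Finset.card_univ, ZMod.card]
      rw [Finset.card_union_of_disjoint hdis, hcard'] at hle
      omega
    have hc0 : C.card = 0 := by omega
    have hno3 : ∀ v, D v ≠ 6*k+3 := by
      intro v hv
      have hvC : v ∈ C := by simp only [hC, Finset.mem_filter]; exact ⟨Finset.mem_univ _, hv⟩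
      have : C = ∅ := Finset.card_eq_zero.mp hc0
      rw [this] at hvC
      simp at hvC
    exact aux_mod_twelve_k k 2 hk (by omega) ⟨6*k, by ring⟩ σ D hσ
      (fun v => by rcases hval v with h|h|h
                   · omega
                   · omega
                   · exact absurd h (hno3 v))
      (htrans 0 1)
  -- case m = 2 : the sign argument
  · have hc2a : C.card = 2 * A.card := by omega
    -- no three consecutive (6k+3)-steps
    have h333 : ∀ v : ZMod (12*k), D v = 6*k+3 → D (v+1) = 6*k+3 → D (v+2) = 6*k+3 →
        False := by
      intro v hv0 hv1 hv2
      have hstep3 : ∀ u : ZMod (12*k), D u = 6*k+3 → D (u+1) = 6*k+3 → D (u+2) = 6*k+3 →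
          D (u+3) = 6*k+3 := by
        intro u h0 h1 h2
        rcases hval (u+3) with h|h|h
        · exact absurd h (f3 u h0)
        · exact absurd h (by have := f2 (u+2) h2; rwa [show u+2+1 = u+3 by ring] at this)
        · exact h
      have hall : ∀ j : ℕ, D (v + (j : ZMod (12*k))) = 6*k+3 ∧
          D (v + (j : ZMod (12*k)) + 1) = 6*k+3 ∧ D (v + (j : ZMod (12*k)) + 2) = 6*k+3 := by
        intro j
        induction j with
        | zero =>
          refine ⟨?_, ?_, ?_⟩ <;> simp only [Nat.cast_zero, add_zero]
          · exact hv0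
          · exact hv1
          · exact hv2
        | succ j ih =>
          obtain ⟨p0, p1, p2⟩ := ih
          have p3 := hstep3 _ p0 p1 p2
          have e : v + ((j+1 : ℕ) : ZMod (12*k)) = v + (j : ZMod (12*k)) + 1 := by
            push_cast; ring
          refine ⟨?_, ?_, ?_⟩
          · rw [e]; exact p1
          · rw [e, show v + (j : ZMod (12*k)) + 1 + 1 = v + (j : ZMod (12*k)) + 2 by ring]
            exact p2
          · rw [e, show v + (j : ZMod (12*k)) + 1 + 2 = v + (j : ZMod (12*k)) + 3 by ring]
            exact p3
      have hallu : ∀ u : ZMod (12*k), D u = 6*k+3 := by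
        intro u
        have h1 : v + (((u - v).val : ℕ) : ZMod (12*k)) = u := by
          rw [ZMod.natCast_zmod_val]; ring
        have := (hall (u - v).val).1
        rwa [h1] at this
      have hAe : A.card = 0 := by
        rw [Finset.card_eq_zero, hA, Finset.filter_eq_empty_iff]
        intro v' _
        have := hallu v'; omega
      have hBe : B.card = 0 := by
        rw [Finset.card_eq_zero, hB, Finset.filter_eq_empty_iff]
        intro v' _
        have := hallu v'; omega
      omega
    -- every (6k)-step vertex is preceded by a (6k+3)-step vertex
    set Z3 := Finset.univ.filter
      (fun u : ZMod (12*k) => D u = 6*k ∧ D (u - 1) = 6*k+3) with hZ3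
    have hCle : C.card ≤ Z3.card * 2 := by
      have hmain := Finset.card_le_card_of_injOn
        (fun v : ZMod (12*k) =>
          if D (v+1) = 6*k then ((v+1 : ZMod (12*k)), true) else (v+2, false))
        (s := C) (t := Z3 ×ˢ (Finset.univ : Finset Bool)) ?_ ?_
      · calc C.card ≤ (Z3 ×ˢ (Finset.univ : Finset Bool)).card := hmain
          _ = Z3.card * 2 := by
            rw [Finset.card_product, Finset.card_univ, Fintype.card_bool]
      · intro v hv
        dsimp only
        have hv3 : D v = 6*k+3 := by
          have hv' : v ∈ C := hv
          simp only [hC, Finset.mem_filter] at hv'; exact hv'.2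
        rcases hval (v+1) with h|h|h
        · rw [if_pos h]
          apply Finset.mem_product.mpr
          refine ⟨?_, Finset.mem_univ _⟩
          simp only [hZ3, Finset.mem_filter]
          exact ⟨Finset.mem_univ _, h, by rwa [show v+1-1 = v by ring]⟩
        · exact absurd h (f2 v hv3)
        · rw [if_neg (by omega)]
          rcases hval (v+2) with h2|h2|h2
          · apply Finset.mem_product.mpr
            refine ⟨?_, Finset.mem_univ _⟩
            simp only [hZ3, Finset.mem_filter]
            exact ⟨Finset.mem_univ _, h2, by rwa [show v+2-1 = v+1 by ring]⟩
          · exact absurd h2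
              (by have := f2 (v+1) h; rwa [show v+1+1 = v+2 by ring] at this)
          · exact (h333 v hv3 h h2).elim
      · intro x hx y hy hxy
        by_cases hx1 : D (x+1) = 6*k <;> by_cases hy1 : D (y+1) = 6*k <;>
          simp only [hx1, hy1, if_pos, if_neg, if_true, if_false, Prod.mk.injEq,
            reduceIte] at hxy
        · exact add_right_cancel hxy.1
        · exact absurd hxy.2 (by simp)
        · exact absurd hxy.2 (by simp)
        · exact add_right_cancel hxy.1
    have hZ3A : Z3 ⊆ A := by
      intro u hu
      simp only [hZ3, Finset.mem_filter] at hu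
      simp only [hA, Finset.mem_filter]
      exact ⟨hu.1, hu.2.1⟩
    have hZ3card : Z3.card ≤ A.card := Finset.card_le_card hZ3A
    have hAZ3 : Z3 = A := Finset.eq_of_subset_of_card_le hZ3A (by omega)
    have C1a : ∀ u : ZMod (12*k), D u = 6*k → D (u - 1) = 6*k+3 := by
      intro u hu
      have huA : u ∈ A := by
        simp only [hA, Finset.mem_filter]; exact ⟨Finset.mem_univ _, hu⟩
      rw [← hAZ3] at huA
      simp only [hZ3, Finset.mem_filter] at huA
      exact huA.2.2
    have C1b : ∀ u : ZMod (12*k), D u = 6*k → D (u - 2) = 6*k+3 := by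
      intro u hu
      rcases hval (u-2) with h|h|h
      · have h1 := C1a _ h
        have h2 := f3 (u-2-1) h1
        rw [show u-2-1+3 = u by ring] at h2
        exact absurd hu h2
      · have h2 := f4 (u-2) h
        rw [show u-2+2 = u by ring] at h2
        exact absurd hu h2
      · exact h
    -- the auxiliary permutation κ
    set c2 : ZMod (12*k) := ((6*k+2 : ℕ) : ZMod (12*k)) with hc2
    set κ : Equiv.Perm (ZMod (12*k)) := σ.trans (Equiv.addRight (-c2)) with hκdef
    have hκ : ∀ v, κ v = σ v - c2 := by
      intro v
      simp only [hκdef, Equiv.trans_apply, Equiv.coe_addRight, sub_eq_add_neg]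
    have hκ0 : ∀ v, D v = 6*k → κ v = v - 2 := by
      intro v h; rw [hκ, hσ, h, hc2]; push_cast; ring
    have hκ2 : ∀ v, D v = 6*k+2 → κ v = v := by
      intro v h; rw [hκ, hσ, h, hc2]; push_cast; ring
    have hκ3 : ∀ v, D v = 6*k+3 → κ v = v + 1 := by
      intro v h; rw [hκ, hσ, h, hc2]; push_cast; ring
    have htrip : ∀ v, κ (κ (κ v)) = v := by
      intro v
      rcases hval v with h|h|h
      · have h1 := C1a v h
        have h2 := C1b v h
        rw [hκ0 v h, hκ3 _ h2, show v - 2 + 1 = v - 1 by ring, hκ3 _ h1,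
          show v - 1 + 1 = v by ring]
      · rw [hκ2 v h, hκ2 v h, hκ2 v h]
      · rcases hval (v+1) with h1|h1|h1
        · have h2 := C1b _ h1
          rw [show v+1-2 = v - 1 by ring] at h2
          rw [hκ3 v h, hκ0 _ h1, show v+1-2 = v-1 by ring, hκ3 _ h2,
            show v-1+1 = v by ring]
        · exact absurd h1 (f2 v h)
        · have h2 : D (v+2) = 6*k := by
            rcases hval (v+2) with h2|h2|h2
            · exact h2
            · exact absurd h2
                (by have := f2 (v+1) h1; rwa [show v+1+1 = v+2 by ring] at this)
            · exact (h333 v h h1 h2).elim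
          rw [hκ3 v h, hκ3 _ h1, show v+1+1 = v+2 by ring, hκ0 _ h2,
            show v+2-2 = v by ring]
    have hκpow : κ ^ 3 = 1 := by
      ext v
      have e : (κ ^ 3) v = κ (κ (κ v)) := by
        rw [show (3:ℕ) = 2 + 1 from rfl, pow_succ, pow_succ, pow_one]
        simp [Equiv.Perm.mul_apply]
      rw [e, htrip]
      simp
    have hsignκ : Equiv.Perm.sign κ = 1 := by
      have h3 : (Equiv.Perm.sign κ)^3 = 1 := by rw [← map_pow, hκpow, map_one]
      rcases Int.units_eq_one_or (Equiv.Perm.sign κ) with h|h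
      · exact h
      · rw [h, Odd.neg_one_pow ⟨1, by norm_num⟩] at h3
        have := congrArg Units.val h3
        norm_num at this
    have hσdecomp : σ = Equiv.addRight c2 * κ := by
      ext v
      simp only [Equiv.Perm.mul_apply, hκ v, Equiv.coe_addRight]
      ring
    have hc1 : c2 = ((3*k+1 : ℕ) : ZMod (12*k)) + ((3*k+1 : ℕ) : ZMod (12*k)) := by
      rw [hc2]; push_cast; ring
    have haddsplit : Equiv.addRight c2
        = Equiv.addRight (((3*k+1:ℕ)) : ZMod (12*k))
          * Equiv.addRight (((3*k+1:ℕ)) : ZMod (12*k)) := by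
      ext v
      simp only [Equiv.Perm.mul_apply, Equiv.coe_addRight, hc1]
      ring
    have hsignadd : Equiv.Perm.sign (Equiv.addRight c2) = 1 := by
      rw [haddsplit, map_mul]
      exact Int.units_mul_self _
    have hsignσ1 : Equiv.Perm.sign σ = 1 := by
      rw [hσdecomp, map_mul, hsignadd, hsignκ, one_mul]
    have hfix : ∀ v : ZMod (12*k), σ v ≠ v := by
      intro v hvv
      have hh : v + ((D v:ℕ) : ZMod (12*k)) = v := by rw [← hσ v]; exact hvv
      have h0 : ((D v:ℕ) : ZMod (12*k)) = ((0:ℕ) : ZMod (12*k)) := by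
        push_cast; linear_combination hh
      have := hcast_inj (D v) 0 (by rcases hval v with h|h|h <;> omega) (by omega) h0
      rcases hval v with h|h|h <;> omega
    have hcyc : σ.IsCycle := by
      refine ⟨0, hfix 0, ?_⟩
      intro y _
      obtain ⟨i, hi⟩ := htrans 0 y
      exact ⟨(i:ℤ), by rw [zpow_natCast]; exact hi⟩
    have hsupp : σ.support = Finset.univ := by
      ext v
      simp [Equiv.Perm.mem_support, hfix v]
    have hsign2 := hcyc.sign
    rw [hsupp, Finset.card_univ, ZMod.card] at hsign2
    have hpow : ((-1 : ℤˣ)) ^ (12*k) = 1 := by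
      rw [show 12*k = 2*(6*k) by ring, pow_mul]
      norm_num
    rw [hpow, hsignσ1] at hsign2
    have := congrArg Units.val hsign2
    norm_num at this
  -- case m = 3 : all steps divisible by 3
  · have hb0 : B.card = 0 := by omega
    have hno2 : ∀ v, D v ≠ 6*k+2 := by
      intro v hv
      have hvB : v ∈ B := by simp only [hB, Finset.mem_filter]; exact ⟨Finset.mem_univ _, hv⟩
      have : B = ∅ := Finset.card_eq_zero.mp hb0
      rw [this] at hvB
      simp at hvB
    exact aux_mod_twelve_k k 3 hk (by omega) ⟨4*k, by ring⟩ σ D hσ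
      (fun v => by rcases hval v with h|h|h
                   · omega
                   · exact absurd h (hno2 v)
                   · omega)
      (htrans 0 1)
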